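/- If G = T ⊕ H where T is torsion and H is torsion-free, then G is strongly Hopfian if and only if both T and H are strongly Hopfian. -/

import Mathlib

/-- An abelian group is strongly Hopfian if for every endomorphism `φ`,
the ascending chain `ker φ ≤ ker φ² ≤ …` is eventually stationary. -/
def StronglyHopfian (G : Type*) [AddCommGroup G] : Prop :=
  ∀ φ : AddMonoid.End G, ∃ n : ℕ, ∀ m : ℕ, n ≤ m →
    AddMonoidHom.ker (φ ^ m : G →+ G) = AddMonoidHom.ker (φ ^ n : G →+ G)

theorem stmt11 {T H : Type*} [AddCommGroup T] [AddCommGroup H]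
    (htor : AddMonoid.IsTorsion T) (htf : ∀ g : H, g ≠ 0 → ¬IsOfFinAddOrder g) :
    StronglyHopfian (T × H) ↔ StronglyHopfian T ∧ StronglyHopfian H := by
  constructor
  · intro hG
    constructor
    · intro ψ
      set φ : AddMonoid.End (T × H) := ψ.prodMap (AddMonoidHom.id H) with hφ
      have key : ∀ (k : ℕ) (x : T × H), (φ ^ k) x = ((ψ ^ k) x.1, x.2) := by
        intro k
        induction k with
        | zero => intro x; rfl
        | succ k ih =>
          intro x
          have : (φ ^ (k+1)) x = (φ ^ k) (φ x) := by
            rw [pow_succ]; rfl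
          rw [this, ih, pow_succ]; rfl
      obtain ⟨n, hn⟩ := hG φ
      refine ⟨n, fun m hm => ?_⟩
      have := hn m hm
      ext t
      have h1 : ((t, (0:H)) ∈ AddMonoidHom.ker (φ ^ m : T × H →+ T × H)) ↔
          ((t, (0:H)) ∈ AddMonoidHom.ker (φ ^ n : T × H →+ T × H)) := by rw [this]
      change (φ ^ m) (t, (0:H)) = 0 ↔ (φ ^ n) (t, (0:H)) = 0 at h1
      change (ψ ^ m) t = 0 ↔ (ψ ^ n) t = 0
      constructor
      · intro ht
        have := h1.mp (by rw [key]; simp [ht])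
        rw [key] at this
        exact (Prod.mk.injEq _ _ _ _).mp this |>.1
      · intro ht
        have := h1.mpr (by rw [key]; simp [ht])
        rw [key] at this
        exact (Prod.mk.injEq _ _ _ _).mp this |>.1
    · intro ψ
      set φ : AddMonoid.End (T × H) := (AddMonoidHom.id T).prodMap ψ with hφ
      have key : ∀ (k : ℕ) (x : T × H), (φ ^ k) x = (x.1, (ψ ^ k) x.2) := by
        intro k
        induction k with
        | zero => intro x; rfl
        | succ k ih =>
          intro x
          have : (φ ^ (k+1)) x = (φ ^ k) (φ x) := by
            rw [pow_succ]; rfl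
          rw [this, ih, pow_succ]; rfl
      obtain ⟨n, hn⟩ := hG φ
      refine ⟨n, fun m hm => ?_⟩
      have := hn m hm
      ext h
      have h1 : (((0:T), h) ∈ AddMonoidHom.ker (φ ^ m : T × H →+ T × H)) ↔
          (((0:T), h) ∈ AddMonoidHom.ker (φ ^ n : T × H →+ T × H)) := by rw [this]
      change (φ ^ m) ((0:T), h) = 0 ↔ (φ ^ n) ((0:T), h) = 0 at h1
      change (ψ ^ m) h = 0 ↔ (ψ ^ n) h = 0
      constructor
      · intro ht
        have := h1.mp (by rw [key]; simp [ht])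
        rw [key] at this
        exact (Prod.mk.injEq _ _ _ _).mp this |>.2
      · intro ht
        have := h1.mpr (by rw [key]; simp [ht])
        rw [key] at this
        exact (Prod.mk.injEq _ _ _ _).mp this |>.2
  · rintro ⟨hT, hH⟩ φ
    -- φ maps T × 0 into T × 0
    have hsnd : ∀ t : T, (φ (t, 0)).2 = 0 := by
      intro t
      obtain ⟨k, hk, hkt⟩ := isOfFinAddOrder_iff_nsmul_eq_zero.mp (htor t)
      by_contra hne
      refine htf _ hne (isOfFinAddOrder_iff_nsmul_eq_zero.mpr ⟨k, hk, ?_⟩)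
      have : k • (φ (t, 0)) = φ (k • (t, 0)) := (map_nsmul φ _ _).symm
      have h0 : k • ((t, (0:H))) = ((0 : T), (0:H)) := by
        rw [Prod.smul_mk, hkt, smul_zero]
      have h5 : k • (φ (t, 0)) = 0 := by
        rw [this, h0]; exact map_zero φ
      calc k • (φ (t, 0)).2 = (k • (φ (t, 0))).2 := rfl
        _ = 0 := by rw [h5]; rfl
    set α : AddMonoid.End T :=
      (AddMonoidHom.fst T H).comp (φ.comp (AddMonoidHom.inl T H)) with hα
    set γ : AddMonoid.End H :=
      (AddMonoidHom.snd T H).comp (φ.comp (AddMonoidHom.inr T H)) with hγ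
    have hαapp : ∀ t : T, φ (t, 0) = (α t, 0) := by
      intro t
      have : φ (t, 0) = ((φ (t, 0)).1, (φ (t, 0)).2) := rfl
      rw [this, hsnd t]; rfl
    have hγapp : ∀ x : T × H, (φ x).2 = γ x.2 := by
      intro x
      have h1 : φ x = φ (x.1, 0) + φ (0, x.2) := by
        rw [← map_add]; congr 1; simp
      calc (φ x).2 = (φ (x.1, 0)).2 + (φ ((0:T), x.2)).2 := by rw [h1]; rfl
        _ = γ x.2 := by rw [hsnd, zero_add]; rfl
    -- iterates
    have hαpow : ∀ (k : ℕ) (t : T), (φ ^ k) (t, 0) = ((α ^ k) t, 0) := by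
      intro k
      induction k with
      | zero => intro t; rfl
      | succ k ih =>
        intro t
        have h2 : (φ ^ (k+1)) (t, (0:H)) = (φ ^ k) (φ (t, 0)) := by
          rw [pow_succ]; rfl
        rw [h2, hαapp t, ih, pow_succ]; rfl
    have hγpow : ∀ (k : ℕ) (x : T × H), ((φ ^ k) x).2 = (γ ^ k) x.2 := by
      intro k
      induction k with
      | zero => intro x; rfl
      | succ k ih =>
        intro x
        have h2 : (φ ^ (k+1)) x = (φ ^ k) (φ x) := by rw [pow_succ]; rfl
        rw [h2, ih, hγapp, pow_succ]; rfl
    obtain ⟨n₁, hn₁⟩ := hT α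
    obtain ⟨n₂, hn₂⟩ := hH γ
    refine ⟨n₁ + n₂, fun m hm => ?_⟩
    ext x
    change (φ ^ m) x = 0 ↔ (φ ^ (n₁ + n₂)) x = 0
    constructor
    · intro hx
      -- γ^m x.2 = 0
      have hγm : (γ ^ m) x.2 = 0 := by rw [← hγpow, hx]; rfl
      have hγn : (γ ^ n₂) x.2 = 0 := by
        have := hn₂ m (le_trans (Nat.le_add_left _ _) hm)
        have h2 : x.2 ∈ AddMonoidHom.ker (γ ^ m : H →+ H) := hγm
        rw [this] at h2
        exact h2
      -- φ^{n₂} x = (t', 0)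
      have hsplit : (φ ^ n₂) x = (((φ ^ n₂) x).1, (0:H)) := by
        have := hγpow n₂ x
        rw [hγn] at this
        exact Prod.ext rfl this
      set t' := ((φ ^ n₂) x).1 with ht'
      -- α^{m - n₂} t' = 0
      have hmsplit : (φ ^ (m - n₂)) ((φ ^ n₂) x) = (φ ^ m) x := by
        have : m - n₂ + n₂ = m := Nat.sub_add_cancel (le_trans (Nat.le_add_left _ _) hm)
        conv_rhs => rw [← this, pow_add]
        rfl
      have hαm : (α ^ (m - n₂)) t' = 0 := by
        have h3 : (φ ^ (m - n₂)) ((t', (0:H))) = 0 := by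
          rw [← hsplit, hmsplit, hx]
        rw [hαpow] at h3
        exact ((Prod.mk.injEq _ _ _ _).mp h3).1
      have hαn : (α ^ n₁) t' = 0 := by
        have hle : n₁ ≤ m - n₂ := by omega
        have := hn₁ (m - n₂) hle
        have h2 : t' ∈ AddMonoidHom.ker (α ^ (m - n₂) : T →+ T) := hαm
        rw [this] at h2
        exact h2
      -- conclude
      have : (φ ^ (n₁ + n₂)) x = (φ ^ n₁) ((φ ^ n₂) x) := by rw [pow_add]; rfl
      rw [this, hsplit, hαpow, hαn]
      rfl
    · intro hx
      have : (φ ^ m) x = (φ ^ (m - (n₁ + n₂))) ((φ ^ (n₁ + n₂)) x) := by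
        have h4 : m - (n₁ + n₂) + (n₁ + n₂) = m := Nat.sub_add_cancel hm
        conv_lhs => rw [← h4, pow_add]
        rfl
      rw [this, hx, map_zero]
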